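/- For every real number x with |x| < π/2, the series \(\sum_{n\ge 1} 2(4^n - 1) B_{2n} (2x)^{2n-1}/(2n)!\) converges and its sum equals \(\tanh(x)\). -/

import Mathlib

open Real

section FormalPart

open PowerSeries

noncomputable def tanhCoeff (n : ℕ) : ℚ :=
  (4 ^ ((n + 1) / 2) - 1) * bernoulli (n + 1) * 2 ^ (n + 1) / (Nat.factorial (n + 1) : ℚ)

noncomputable def cR (n : ℕ) : ℝ := ((tanhCoeff n : ℚ) : ℝ)

noncomputable def T : ℚ⟦X⟧ := PowerSeries.mk tanhCoeff
noncomputable def coshQ : ℚ⟦X⟧ :=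
  PowerSeries.mk fun n => if Even n then ((Nat.factorial n : ℚ))⁻¹ else 0
noncomputable def sinhQ : ℚ⟦X⟧ :=
  PowerSeries.mk fun n => if Even n then 0 else ((Nat.factorial n : ℚ))⁻¹

theorem bernoulli_odd_eq_zero' {n : ℕ} (h : Odd n) (h1 : 1 < n) : bernoulli n = 0 := by
  rw [bernoulli_eq_bernoulli'_of_ne_one (by omega)]
  exact bernoulli'_eq_zero_of_odd h h1

theorem tanhCoeff_even {n : ℕ} (h : Even n) : tanhCoeff n = 0 := by
  rcases Nat.eq_zero_or_pos n with h0 | h0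
  · simp [tanhCoeff, h0]
  · have : bernoulli (n + 1) = 0 :=
      bernoulli_odd_eq_zero' (h.add_one) (by omega)
    simp [tanhCoeff, this]

theorem formal1 :
    (X : ℚ⟦X⟧) * T =
      rescale 4 (bernoulliPowerSeries ℚ) - rescale 2 (bernoulliPowerSeries ℚ) + X := by
  rw [T]
  ext n
  rcases n with _ | n
  · simp [bernoulliPowerSeries, rescale_mk, coeff_zero_eq_constantCoeff]
  · rw [coeff_succ_X_mul]
    simp only [map_add, map_sub, coeff_rescale, bernoulliPowerSeries, coeff_mk, coeff_X,
      tanhCoeff, Algebra.algebraMap_self, RingHom.id_apply]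
    have hb : ((Nat.factorial (n + 1)) : ℚ) ≠ 0 := by
      exact_mod_cast (Nat.factorial_ne_zero _)
    rcases Nat.even_or_odd (n + 1) with he | ho
    · -- n+1 even, = 2m
      obtain ⟨m, hm⟩ := he
      have h0 : 0 < m := by omega
      have hn1 : (n + 1) / 2 = m := by omega
      have hne : ¬ (n + 1 = 1) := by omega
      rw [hn1, if_neg hne]
      have key : ((4 : ℚ) ^ m - 1) * 2 ^ (n + 1) = 4 ^ (n + 1) - 2 ^ (n + 1) := by
        have h4 : (4 : ℚ) ^ (n + 1) = 2 ^ (n + 1) * 2 ^ (n + 1) := by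
          rw [← pow_add, show (4:ℚ) = 2^2 by norm_num, ← pow_mul]; congr 1; omega
        have h2 : (4 : ℚ) ^ m = 2 ^ (n + 1) := by
          rw [show (4:ℚ) = 2^2 by norm_num, ← pow_mul]; congr 1; omega
        rw [h2, h4]; ring
      field_simp
      linear_combination (bernoulli (n+1)) * key
    · -- n+1 odd
      rcases Nat.lt_or_ge 1 (n + 1) with h1 | h1
      · have hb0 : bernoulli (n + 1) = 0 := bernoulli_odd_eq_zero' ho h1
        have hne : ¬ (n + 1 = 1) := by omega
        simp [hb0, hne]; omega
      · have : n = 0 := by omega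
        subst this
        norm_num [bernoulli_one]

theorem formal2 : ((PowerSeries.exp ℚ) ^ 2 + 1) * T = (PowerSeries.exp ℚ) ^ 2 - 1 := by
  have hB := bernoulliPowerSeries_mul_exp_sub_one ℚ
  have h2 := congrArg (rescale (2 : ℚ)) hB
  have h4 := congrArg (rescale (4 : ℚ)) hB
  rw [map_mul, map_sub, map_one, rescale_X] at h2 h4
  have e2 : rescale (2 : ℚ) (PowerSeries.exp ℚ) = (PowerSeries.exp ℚ) ^ 2 := by
    rw [PowerSeries.exp_pow_eq_rescale_exp]; norm_num
  have e4 : rescale (4 : ℚ) (PowerSeries.exp ℚ) = (PowerSeries.exp ℚ) ^ 4 := by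
    rw [PowerSeries.exp_pow_eq_rescale_exp]; norm_num
  rw [e2] at h2
  rw [e4] at h4
  -- key cancellation
  have hX : (X : ℚ⟦X⟧) ≠ 0 := X_ne_zero
  have hE : ((PowerSeries.exp ℚ) ^ 2 - 1) ≠ 0 := by
    intro h
    have := congrArg (coeff 1) h
    rw [← e2] at this
    simp [coeff_rescale, coeff_exp] at this
  have key : (X * ((PowerSeries.exp ℚ) ^ 2 - 1)) * (((PowerSeries.exp ℚ) ^ 2 + 1) * T) =
      (X * ((PowerSeries.exp ℚ) ^ 2 - 1)) * ((PowerSeries.exp ℚ) ^ 2 - 1) := by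
    have hT : (X : ℚ⟦X⟧) * T =
        rescale 4 (bernoulliPowerSeries ℚ) - rescale 2 (bernoulliPowerSeries ℚ) + X :=
      formal1
    have hsq : ((PowerSeries.exp ℚ) ^ 2) ^ 2 = (PowerSeries.exp ℚ) ^ 4 := by ring
    calc (X * ((PowerSeries.exp ℚ) ^ 2 - 1)) * (((PowerSeries.exp ℚ) ^ 2 + 1) * T)
        = (((PowerSeries.exp ℚ) ^ 2 - 1) * ((PowerSeries.exp ℚ) ^ 2 + 1)) * (X * T) := by ring
      _ = (((PowerSeries.exp ℚ) ^ 2) ^ 2 - 1) *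
            (rescale 4 (bernoulliPowerSeries ℚ) - rescale 2 (bernoulliPowerSeries ℚ) + X) := by
          rw [hT]; ring
      _ = ((PowerSeries.exp ℚ) ^ 4 - 1) * rescale 4 (bernoulliPowerSeries ℚ)
            - ((PowerSeries.exp ℚ) ^ 2 + 1) * (rescale 2 (bernoulliPowerSeries ℚ) * ((PowerSeries.exp ℚ) ^ 2 - 1))
            + ((PowerSeries.exp ℚ) ^ 4 - 1) * X := by rw [hsq]; ring
      _ = C 4 * X - ((PowerSeries.exp ℚ) ^ 2 + 1) * (C 2 * X) + ((PowerSeries.exp ℚ) ^ 4 - 1) * X := by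
          rw [mul_comm ((PowerSeries.exp ℚ) ^ 4 - 1) (rescale 4 (bernoulliPowerSeries ℚ)), h4, h2]
      _ = (X * ((PowerSeries.exp ℚ) ^ 2 - 1)) * ((PowerSeries.exp ℚ) ^ 2 - 1) := by
          have hsq' : (PowerSeries.exp ℚ) ^ 4 = ((PowerSeries.exp ℚ) ^ 2) ^ 2 := by ring
          rw [hsq']
          have c4 : (C 4 : ℚ⟦X⟧) = 4 := by simp [map_ofNat]
          have c2 : (C 2 : ℚ⟦X⟧) = 2 := by simp [map_ofNat]
          rw [c4, c2]; ring
  exact mul_left_cancel₀ (mul_ne_zero hX hE) key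


theorem formal3 : coshQ * T = sinhQ := by
  have hEm : PowerSeries.exp ℚ * evalNegHom (PowerSeries.exp ℚ) = 1 := PowerSeries.exp_mul_exp_neg_eq_one
  have hcosh : C 2 * coshQ = PowerSeries.exp ℚ + evalNegHom (PowerSeries.exp ℚ) := by
    ext n
    simp only [coshQ, map_add, coeff_exp, PowerSeries.coeff_mk, coeff_C_mul, evalNegHom,
      coeff_rescale, Algebra.algebraMap_self, RingHom.id_apply]
    rcases Nat.even_or_odd n with h | h
    · rw [if_pos h, h.neg_one_pow]
      rw [one_div]; ring
    · rw [if_neg (Nat.not_even_iff_odd.mpr h), h.neg_one_pow]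
      ring
  have hsinh : C 2 * sinhQ = PowerSeries.exp ℚ - evalNegHom (PowerSeries.exp ℚ) := by
    ext n
    simp only [sinhQ, map_sub, coeff_exp, PowerSeries.coeff_mk, coeff_C_mul, evalNegHom,
      coeff_rescale, Algebra.algebraMap_self, RingHom.id_apply]
    rcases Nat.even_or_odd n with h | h
    · rw [if_pos h, h.neg_one_pow]
      ring
    · rw [if_neg (Nat.not_even_iff_odd.mpr h), h.neg_one_pow]
      rw [one_div]; ring
  have hcan : (C 2 * PowerSeries.exp ℚ) ≠ 0 := by
    intro h
    have := congrArg (constantCoeff) h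
    simp [constantCoeff_exp] at this
  apply mul_left_cancel₀ hcan
  calc C 2 * PowerSeries.exp ℚ * (coshQ * T) = PowerSeries.exp ℚ * (C 2 * coshQ) * T := by ring
    _ = (PowerSeries.exp ℚ ^ 2 + PowerSeries.exp ℚ * evalNegHom (PowerSeries.exp ℚ)) * T := by rw [hcosh]; ring
    _ = (PowerSeries.exp ℚ ^ 2 + 1) * T := by rw [hEm]
    _ = PowerSeries.exp ℚ ^ 2 - 1 := formal2
    _ = PowerSeries.exp ℚ ^ 2 - PowerSeries.exp ℚ * evalNegHom (PowerSeries.exp ℚ) := by rw [hEm]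
    _ = PowerSeries.exp ℚ * (C 2 * sinhQ) := by rw [hsinh]; ring
    _ = C 2 * PowerSeries.exp ℚ * sinhQ := by ring

theorem key_coeff (n : ℕ) :
    ∑ p ∈ Finset.HasAntidiagonal.antidiagonal n,
        (if Even p.1 then ((Nat.factorial p.1 : ℝ))⁻¹ else 0) * cR p.2 =
      (if Even n then 0 else ((Nat.factorial n : ℝ))⁻¹) := by
  have h := congrArg (PowerSeries.coeff n) formal3
  rw [PowerSeries.coeff_mul] at h
  simp only [coshQ, sinhQ, T, PowerSeries.coeff_mk] at h
  have := congrArg (fun q : ℚ => (q : ℝ)) h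
  push_cast at this
  rw [show ((if Even n then 0 else ((Nat.factorial n : ℝ))⁻¹) : ℝ) =
      (((if Even n then 0 else ((Nat.factorial n : ℚ))⁻¹) : ℚ) : ℝ) by split <;> push_cast <;> rfl,
    ← this]
  refine Finset.sum_congr rfl fun p hp => ?_
  rcases em (Even p.1) with he | ho
  · simp [he, cR]
  · simp [ho, cR]

end FormalPart

theorem bern_bound {m : ℕ} (hm : m ≠ 0) :
    |((bernoulli (2 * m) : ℚ) : ℝ)| / (Nat.factorial (2 * m) : ℝ) ≤ 4 / (2 * π) ^ (2 * m) := by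
  have hz := hasSum_zeta_nat hm
  have h2 := hasSum_zeta_two
  have hle : (∑' n : ℕ, 1 / (n : ℝ) ^ (2 * m)) ≤ ∑' n : ℕ, (1 : ℝ) / (n : ℝ) ^ 2 := by
    refine Summable.tsum_le_tsum (fun n => ?_) hz.summable h2.summable
    rcases Nat.eq_zero_or_pos n with h0 | h0
    · subst h0
      rw [Nat.cast_zero, zero_pow (by omega : 2 * m ≠ 0), zero_pow (two_ne_zero), div_zero]
    · apply div_le_div_of_nonneg_left one_pos.le (by positivity)
      exact pow_le_pow_right₀ (by exact_mod_cast h0) (by omega)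
  rw [h2.tsum_eq] at hle
  have hpi : π ^ 2 / 6 ≤ 2 := by nlinarith [pi_lt_d2, pi_pos]
  set Bq : ℝ := ((bernoulli (2 * m) : ℚ) : ℝ) with hBq
  have hnn : (0 : ℝ) ≤ ∑' n : ℕ, 1 / (n : ℝ) ^ (2 * m) :=
    tsum_nonneg fun n => by positivity
  have habs' : |((-1 : ℝ) ^ (m + 1) * (2 : ℝ) ^ (2 * m - 1) * π ^ (2 * m) *
      Bq / (Nat.factorial (2 * m) : ℝ))| ≤ 2 := by
    rw [← hz.tsum_eq, abs_of_nonneg hnn]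
    linarith
  have habs : (2 : ℝ) ^ (2 * m - 1) * π ^ (2 * m) * (|Bq| / (Nat.factorial (2 * m) : ℝ)) ≤ 2 := by
    calc (2 : ℝ) ^ (2 * m - 1) * π ^ (2 * m) * (|Bq| / (Nat.factorial (2 * m) : ℝ))
        = |((-1 : ℝ) ^ (m + 1) * (2 : ℝ) ^ (2 * m - 1) * π ^ (2 * m) *
            Bq / (Nat.factorial (2 * m) : ℝ))| := by
          simp only [abs_div, abs_mul, abs_pow, abs_neg, abs_one, one_pow, one_mul,
            abs_of_nonneg pi_pos.le, abs_of_nonneg (by norm_num : (0:ℝ) ≤ 2), Nat.abs_cast]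
          ring
      _ ≤ 2 := habs'
  have hpow : (2 * π) ^ (2 * m) = 2 * ((2:ℝ) ^ (2 * m - 1) * π ^ (2 * m)) := by
    rw [mul_pow, ← mul_assoc]
    congr 1
    rw [← pow_succ']
    congr 1
    omega
  have hf : (0:ℝ) < (Nat.factorial (2 * m) : ℝ) := by exact_mod_cast Nat.factorial_pos _
  rw [div_le_div_iff₀ hf (by positivity)]
  calc |Bq| * (2 * π) ^ (2 * m)
      = 2 * ((2:ℝ) ^ (2 * m - 1) * π ^ (2 * m) * (|Bq| / (Nat.factorial (2 * m) : ℝ)))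
        * (Nat.factorial (2 * m) : ℝ) := by
        rw [hpow]; field_simp
    _ ≤ 2 * 2 * (Nat.factorial (2 * m) : ℝ) := by nlinarith [habs]
    _ = 4 * (Nat.factorial (2 * m) : ℝ) := by ring

theorem c_norm_le {x : ℝ} (hx0 : x ≠ 0) (j : ℕ) :
    ‖cR j * x ^ j‖ ≤ (4 * (2 * |x| / π) / |x|) * (2 * |x| / π) ^ j := by
  have hπ : (0:ℝ) < π := pi_pos
  have hxa : (0:ℝ) < |x| := abs_pos.mpr hx0
  set q : ℝ := 2 * |x| / π with hq
  have hq0 : 0 < q := by positivity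
  rcases Nat.even_or_odd j with he | ho
  · rw [cR, tanhCoeff_even he]
    simp only [Rat.cast_zero, zero_mul, norm_zero]
    positivity
  · obtain ⟨k, hk⟩ := ho
    set m : ℕ := k + 1 with hmdef
    have hj1 : j + 1 = 2 * m := by omega
    have hm : m ≠ 0 := by omega
    have hcoeff : cR j = (((4:ℚ) ^ m - 1) * bernoulli (2 * m) * 2 ^ (2 * m) /
        (Nat.factorial (2 * m) : ℚ) : ℚ) := by
      have e1 : (j + 1) / 2 = m := by omega
      rw [cR, tanhCoeff, e1, hj1]
    have habs : ‖cR j‖ ≤ (4:ℝ) ^ m * (2:ℝ) ^ (2 * m) *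
        (|((bernoulli (2 * m) : ℚ) : ℝ)| / (Nat.factorial (2 * m) : ℝ)) := by
      rw [hcoeff]
      push_cast
      rw [norm_div, norm_mul, norm_mul]
      simp only [Real.norm_eq_abs]
      have h4m1 : (1:ℝ) ≤ 4 ^ m := one_le_pow₀ (by norm_num)
      have h1 : |(4:ℝ) ^ m - 1| ≤ 4 ^ m := by
        rw [abs_of_nonneg (by linarith)]
        linarith
      have h2 : |(2:ℝ) ^ (2 * m)| = 2 ^ (2 * m) := abs_of_pos (by positivity)
      have h3 : |(Nat.factorial (2 * m) : ℝ)| = (Nat.factorial (2 * m) : ℝ) :=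
        abs_of_pos (by exact_mod_cast Nat.factorial_pos _)
      rw [h2, h3]
      have hfp : (0:ℝ) < (Nat.factorial (2 * m) : ℝ) := by exact_mod_cast Nat.factorial_pos _
      rw [div_le_iff₀ hfp]
      have expand : (4:ℝ) ^ m * 2 ^ (2 * m) *
          (|((bernoulli (2 * m) : ℚ) : ℝ)| / (Nat.factorial (2 * m) : ℝ)) *
          (Nat.factorial (2 * m) : ℝ) =
          (4:ℝ) ^ m * 2 ^ (2 * m) * |((bernoulli (2 * m) : ℚ) : ℝ)| := by
        field_simp
      rw [expand]
      have := abs_nonneg ((bernoulli (2 * m) : ℚ) : ℝ)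
      nlinarith [pow_pos (by norm_num : (0:ℝ) < 2) (2 * m), h1,
        mul_le_mul_of_nonneg_right h1 this]
    have hbb := bern_bound hm
    have hnorm : ‖cR j * x ^ j‖ = ‖cR j‖ * |x| ^ j := by
      rw [norm_mul, Real.norm_eq_abs (x ^ j), abs_pow, Real.norm_eq_abs]
    rw [hnorm]
    have step : ‖cR j‖ * |x| ^ j ≤
        ((4:ℝ) ^ m * (2:ℝ) ^ (2 * m) * (4 / (2 * π) ^ (2 * m))) * |x| ^ j := by
      have h1 : ‖cR j‖ ≤ (4:ℝ) ^ m * (2:ℝ) ^ (2 * m) * (4 / (2 * π) ^ (2 * m)) :=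
        le_trans habs (by
          apply mul_le_mul_of_nonneg_left hbb (by positivity))
      exact mul_le_mul_of_nonneg_right h1 (by positivity)
    refine le_trans step (le_of_eq ?_)
    -- algebraic identity
    have h2pi : ((2:ℝ) * π) ^ (2 * m) = 4 ^ m * π ^ (2 * m) := by
      rw [mul_pow, show (4:ℝ) = 2 ^ 2 by norm_num, ← pow_mul]
    have hxj : |x| ^ (2 * m) = |x| ^ j * |x| := by
      rw [← pow_succ]
      congr 1
      omega
    have hqe : q ^ (2 * m) = 2 ^ (2 * m) * |x| ^ (2 * m) / π ^ (2 * m) := by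
      rw [hq, div_pow, mul_pow]
    have lhs_eq : ((4:ℝ) ^ m * (2:ℝ) ^ (2 * m) * (4 / (2 * π) ^ (2 * m))) * |x| ^ j
        = 4 * (2 ^ (2 * m) * |x| ^ j / π ^ (2 * m)) := by
      rw [h2pi]
      have h4m : (0:ℝ) < 4 ^ m := by positivity
      field_simp
    have rhs_eq : (4 * q / |x|) * q ^ j = 4 * (2 ^ (2 * m) * |x| ^ j / π ^ (2 * m)) := by
      have : (4 * q / |x|) * q ^ j = 4 * q ^ (2 * m) / |x| := by
        rw [show 2 * m = j + 1 by omega, pow_succ]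
        field_simp
      rw [this, hqe, hxj]
      field_simp
    rw [lhs_eq, rhs_eq]

theorem hasSum_bernoulli_tanh (x : ℝ) (hx : |x| < π / 2) :
    HasSum
      (fun n : ℕ =>
        2 * ((4 : ℝ) ^ (n + 1) - 1) * (bernoulli (2 * (n + 1)) : ℝ) *
          (2 * x) ^ (2 * (n + 1) - 1) / (Nat.factorial (2 * (n + 1)) : ℝ))
      (Real.tanh x) := by
  rcases eq_or_ne x 0 with rfl | hx0
  · have h0 : (fun n : ℕ =>
        2 * ((4 : ℝ) ^ (n + 1) - 1) * (bernoulli (2 * (n + 1)) : ℝ) *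
          (2 * (0:ℝ)) ^ (2 * (n + 1) - 1) / (Nat.factorial (2 * (n + 1)) : ℝ)) =
        fun _ => (0 : ℝ) := by
      funext n
      rw [mul_zero, zero_pow (by omega)]
      ring
    rw [h0, Real.tanh_zero]
    exact hasSum_zero
  · have hπ : (0:ℝ) < π := pi_pos
    have hxa : (0:ℝ) < |x| := abs_pos.mpr hx0
    have hq1 : 2 * |x| / π < 1 := by rw [div_lt_one hπ]; linarith
    have hq0 : (0:ℝ) ≤ 2 * |x| / π := by positivity
    have hsumgeo : Summable (fun j : ℕ => (4 * (2 * |x| / π) / |x|) * (2 * |x| / π) ^ j) :=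
      (summable_geometric_of_lt_one hq0 hq1).mul_left _
    have hcnorm : Summable fun j : ℕ => ‖cR j * x ^ j‖ :=
      hsumgeo.of_nonneg_of_le (fun _ => norm_nonneg _) (c_norm_le hx0)
    have hC : HasSum (fun j : ℕ => cR j * x ^ j) (∑' j : ℕ, cR j * x ^ j) :=
      hcnorm.of_norm.hasSum
    have hexp : ∀ y : ℝ, HasSum (fun n : ℕ => y ^ n / (Nat.factorial n : ℝ)) (Real.exp y) := by
      intro y
      rw [Real.exp_eq_exp_ℝ]
      exact NormedSpace.expSeries_div_hasSum_exp y
    -- cosh series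
    have hA : HasSum (fun i : ℕ => (if Even i then ((Nat.factorial i : ℝ))⁻¹ else 0) * x ^ i)
        (Real.cosh x) := by
      have h := ((hexp x).add (hexp (-x))).div_const 2
      rw [← Real.cosh_eq] at h
      refine h.congr_fun fun i => ?_
      rcases Nat.even_or_odd i with he | ho
      · rw [if_pos he, he.neg_pow]
        field_simp
        ring
      · rw [if_neg (Nat.not_even_iff_odd.mpr ho), ho.neg_pow]
        ring
    -- sinh series
    have hS : HasSum (fun n : ℕ => (if Even n then 0 else ((Nat.factorial n : ℝ))⁻¹) * x ^ n)
        (Real.sinh x) := by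
      have h := ((hexp x).sub (hexp (-x))).div_const 2
      rw [← Real.sinh_eq] at h
      refine h.congr_fun fun i => ?_
      rcases Nat.even_or_odd i with he | ho
      · rw [if_pos he, he.neg_pow]
        ring
      · rw [if_neg (Nat.not_even_iff_odd.mpr ho), ho.neg_pow]
        field_simp
        ring
    have hAnorm : Summable fun i : ℕ =>
        ‖(if Even i then ((Nat.factorial i : ℝ))⁻¹ else 0) * x ^ i‖ := by
      refine (Real.summable_pow_div_factorial |x|).of_nonneg_of_le
        (fun _ => norm_nonneg _) fun i => ?_
      rcases Nat.even_or_odd i with he | ho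
      · rw [if_pos he]
        have heq : ‖((Nat.factorial i : ℝ))⁻¹ * x ^ i‖ = |x| ^ i / (Nat.factorial i : ℝ) := by
          rw [norm_mul, norm_inv, Real.norm_eq_abs, Real.norm_eq_abs, abs_pow, Nat.abs_cast,
            inv_mul_eq_div]
        rw [heq]
      · rw [if_neg (Nat.not_even_iff_odd.mpr ho), zero_mul, norm_zero]
        positivity
    -- Cauchy product
    have hprod := tsum_mul_tsum_eq_tsum_sum_antidiagonal_of_summable_norm hAnorm hcnorm
    rw [hA.tsum_eq] at hprod
    have hinner : ∀ n : ℕ, (∑ p ∈ Finset.HasAntidiagonal.antidiagonal n,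
        ((if Even p.1 then ((Nat.factorial p.1 : ℝ))⁻¹ else 0) * x ^ p.1) *
          (cR p.2 * x ^ p.2)) =
        (if Even n then 0 else ((Nat.factorial n : ℝ))⁻¹) * x ^ n := by
      intro n
      rw [← key_coeff n, Finset.sum_mul]
      refine Finset.sum_congr rfl fun p hp => ?_
      have hpn : p.1 + p.2 = n := Finset.HasAntidiagonal.mem_antidiagonal.mp hp
      rw [← hpn, pow_add]
      ring
    simp only [hinner] at hprod
    rw [hS.tsum_eq] at hprod
    -- hprod : cosh x * ∑' cR j x^j = sinh x
    have hSval : (∑' j : ℕ, cR j * x ^ j) = Real.tanh x := by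
      rw [Real.tanh_eq_sinh_div_cosh, eq_div_iff (Real.cosh_pos x).ne']
      rw [mul_comm]
      exact hprod
    rw [hSval] at hC
    -- reindex
    have hinj : Function.Injective (fun n : ℕ => 2 * n + 1) := fun a b h => by dsimp at h; omega
    have hvanish : ∀ m ∉ Set.range (fun n : ℕ => 2 * n + 1), cR m * x ^ m = 0 := by
      intro m hm
      have hme : Even m := by
        rcases Nat.even_or_odd m with he | ho
        · exact he
        · obtain ⟨k, hk⟩ := ho
          exact absurd ⟨k, by dsimp; omega⟩ hm
      rw [cR, tanhCoeff_even hme]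
      simp
    have hre : HasSum (fun n : ℕ => cR (2 * n + 1) * x ^ (2 * n + 1)) (Real.tanh x) :=
      (Function.Injective.hasSum_iff hinj hvanish).mpr hC
    refine hre.congr_fun fun n => ?_
    rw [cR, tanhCoeff]
    have e1 : (2 * n + 1 + 1) / 2 = n + 1 := by omega
    have e2 : 2 * n + 1 + 1 = 2 * (n + 1) := by omega
    have e3 : 2 * (n + 1) - 1 = 2 * n + 1 := by omega
    rw [e1, e2, e3]
    push_cast
    have hx2 : (2 * x) ^ (2 * n + 1) = 2 ^ (2 * n + 1) * x ^ (2 * n + 1) := mul_pow 2 x _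
    rw [hx2]
    have hfac : ((Nat.factorial (2 * (n + 1)) : ℝ)) ≠ 0 := by
      exact_mod_cast Nat.factorial_ne_zero _
    field_simp
    ring
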